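/- Let {1_A} ∪ B be a basis of the vector space A with a total order ≤ on B. Then the set consisting of 1_A^{⊗ℓ} together with all products sym_ℓ(b_1)·sym_ℓ(b_2)⋯sym_ℓ(b_j) for b_1 ≤ b_2 ≤ ⋯ ≤ b_j elements of B and 1 ≤ j ≤ ℓ, is a vector space basis of TS^ℓ(A). -/

import Mathlib

open PiTensorProduct
open scoped TensorProduct

/-- The symmetrization map `sym_ℓ(a) = Σ_{i=1}^ℓ 1^{⊗(i-1)} ⊗ a ⊗ 1^{⊗(ℓ-i)}`. -/
noncomputable def symTen (k A : Type*) [Field k] [Ring A] [Algebra k A] (ℓ : ℕ)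
    (a : A) : ⨂[k] _ : Fin ℓ, A :=
  ∑ i : Fin ℓ, tprod k (Function.update (fun _ : Fin ℓ => (1 : A)) i a)

/-- The submodule of symmetric tensors `TS^ℓ(A) ⊆ A^{⊗ℓ}`. -/
noncomputable def tsSubmodule (k A : Type*) [Field k] [Ring A] [Algebra k A] (ℓ : ℕ) :
    Submodule k (⨂[k] _ : Fin ℓ, A) where
  carrier := {x | ∀ σ : Equiv.Perm (Fin ℓ),
    PiTensorProduct.reindex k (fun _ : Fin ℓ => A) σ x = x}
  add_mem' hx hy σ := by rw [map_add, hx σ, hy σ]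
  zero_mem' σ := map_zero _
  smul_mem' c x hx σ := by rw [map_smul, hx σ]

namespace TSAux

/-! ### Order on `Option ι` (via `WithTop`) -/

section OrderStuff

variable {ι : Type*} [LinearOrder ι]

attribute [-instance] instLEOption instLTOption

noncomputable instance optLO : LinearOrder (Option ι) :=
  inferInstanceAs (LinearOrder (WithTop ι))

lemma le_none (x : Option ι) : x ≤ (none : Option ι) :=
  le_top (α := WithTop ι) (a := x)

lemma some_le_some {a b : ι} : (some a : Option ι) ≤ some b ↔ a ≤ b :=
  WithTop.coe_le_coe (α := ι) (a := b) (b := a)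

lemma none_le_iff {x : Option ι} : (none : Option ι) ≤ x ↔ x = none :=
  top_le_iff (α := WithTop ι) (a := x)

/-! ### The canonical tuple of a sorted list -/

variable {ℓ : ℕ}

/-- `wfun ℓ l` is the tuple `(l₁, …, l_j, none, …, none)`. -/
def wfun (ℓ : ℕ) (l : List ι) : Fin ℓ → Option ι := fun i => l[(i : ℕ)]?

lemma wfun_lt {l : List ι} {i : Fin ℓ} (h : (i : ℕ) < l.length) :
    wfun ℓ l i = some (l.get ⟨i, h⟩) := by
  simp [wfun, List.getElem?_eq_getElem h]

lemma wfun_ge {l : List ι} {i : Fin ℓ} (h : l.length ≤ (i : ℕ)) :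
    wfun ℓ l i = none := by
  simp [wfun, List.getElem?_eq_none h]

lemma wfun_injective {l l' : List ι} (hl : l.length ≤ ℓ) (hl' : l'.length ≤ ℓ)
    (h : wfun ℓ l = wfun ℓ l') : l = l' := by
  apply List.ext_getElem?
  intro n
  rcases lt_or_ge n ℓ with hn | hn
  · exact congrFun h ⟨n, hn⟩
  · rw [List.getElem?_eq_none (hl.trans hn), List.getElem?_eq_none (hl'.trans hn)]

lemma wfun_monotone {l : List ι} (hs : l.Pairwise (· ≤ ·)) (hl : l.length ≤ ℓ) :
    Monotone (wfun ℓ l) := by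
  intro i j hij
  rcases lt_or_ge (j : ℕ) l.length with hj | hj
  · have hi : (i : ℕ) < l.length := lt_of_le_of_lt hij hj
    rw [wfun_lt hi, wfun_lt hj]
    exact some_le_some.2 (List.Pairwise.rel_get_of_le hs hij)
  · rw [wfun_ge hj]
    exact le_none _
lemma monotone_eq_wfun :
    ∀ {m : ℕ} (g : Fin m → Option ι), Monotone g →
      ∃ l : List ι, l.Pairwise (· ≤ ·) ∧ l.length ≤ m ∧ wfun m l = g := by
  intro m
  induction m with
  | zero =>
    intro g _
    exact ⟨[], List.Pairwise.nil, le_refl 0, funext fun i => absurd i.2 (Nat.not_lt_zero _)⟩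
  | succ n ih =>
    intro g hg
    match h0 : g 0 with
    | none =>
      refine ⟨[], List.Pairwise.nil, Nat.zero_le _, funext fun i => ?_⟩
      have : g 0 ≤ g i := hg (Fin.zero_le i)
      rw [h0] at this
      rw [wfun_ge (Nat.zero_le _), (none_le_iff.1 this)]
    | some a =>
      obtain ⟨l', hs', hl', hw'⟩ := ih (g ∘ Fin.succ)
        (fun i j hij => hg (Fin.succ_le_succ_iff.2 hij))
      refine ⟨a :: l', ?_, Nat.succ_le_succ hl', funext fun i => ?_⟩
      · rw [List.pairwise_cons]
        refine ⟨fun x hx => ?_, hs'⟩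
        obtain ⟨r, hr, rfl⟩ := List.getElem_of_mem hx
        have h1 : g 0 ≤ g (Fin.succ ⟨r, lt_of_lt_of_le hr hl'⟩) := hg (Fin.zero_le _)
        rw [h0] at h1
        have h2 := congrFun hw' ⟨r, lt_of_lt_of_le hr hl'⟩
        rw [wfun_lt (by simpa using hr)] at h2
        have h3 : (some (l'[r]) : Option ι) = g (Fin.succ ⟨r, lt_of_lt_of_le hr hl'⟩) := by
          simpa using h2
        rw [← h3] at h1
        exact some_le_some.1 h1
      · rcases Fin.eq_zero_or_eq_succ i with rfl | ⟨j, rfl⟩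
        · rw [wfun_lt (by simp), h0]
          rfl
        · have := congrFun hw' j
          simpa [wfun] using this

end OrderStuff

set_option linter.unusedSectionVars false

section Main

variable {k A : Type*} [Field k] [Ring A] [Algebra k A] {ℓ : ℕ}
variable {ι : Type*} [LinearOrder ι]

lemma sorted_eq_of_equiv {l l' : List ι} (hs : l.Pairwise (· ≤ ·)) (hs' : l'.Pairwise (· ≤ ·))
    (σ : Fin l.length ≃ Fin l'.length) (h : ∀ r, l'.get (σ r) = l.get r) : l = l' := by
  refine List.Perm.eq_of_pairwise' hs hs' (Multiset.coe_eq_coe.1 ?_)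
  have hgets : l.get = l'.get ∘ σ := funext fun r => (h r).symm
  calc (l : Multiset ι) = ↑(List.ofFn l.get) := by rw [List.ofFn_get]
    _ = Multiset.map l.get Finset.univ.val := (Fin.univ_val_map _).symm
    _ = Multiset.map (l'.get ∘ σ) Finset.univ.val := by rw [hgets]
    _ = Multiset.map l'.get (Multiset.map σ Finset.univ.val) := by
        rw [Multiset.map_map]
    _ = Multiset.map l'.get Finset.univ.val := by rw [Multiset.map_univ_val_equiv]
    _ = ↑(List.ofFn l'.get) := Fin.univ_val_map _
    _ = ↑l' := by rw [List.ofFn_get]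

/-! ### Coordinate functionals -/

/-- The coordinate functional on `A^{⊗ℓ}` attached to a tuple `g` of basis indices. -/
noncomputable def lamF (e : Module.Basis (Option ι) k A) (ℓ : ℕ) (g : Fin ℓ → Option ι) :
    (⨂[k] _ : Fin ℓ, A) →ₗ[k] k :=
  PiTensorProduct.lift ((MultilinearMap.mkPiAlgebra k (Fin ℓ) k).compLinearMap
    fun i => e.coord (g i))

lemma lamF_tprod (e : Module.Basis (Option ι) k A) (g : Fin ℓ → Option ι) (v : Fin ℓ → A) :
    lamF e ℓ g (tprod k v) = ∏ i, e.repr (v i) (g i) := by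
  simp [lamF, Module.Basis.coord_apply]

lemma lamF_tprod_basis (e : Module.Basis (Option ι) k A) (g f : Fin ℓ → Option ι) :
    lamF e ℓ g (tprod k fun i => e (f i)) = if g = f then 1 else 0 := by
  rw [lamF_tprod]
  simp only [Module.Basis.repr_self, Finsupp.single_apply]
  rcases eq_or_ne g f with rfl | h
  · simp
  · rw [if_neg h]
    obtain ⟨i, hi⟩ := Function.ne_iff.1 h
    exact Finset.prod_eq_zero (Finset.mem_univ i) (if_neg (Ne.symm hi))

lemma lamF_reindex (e : Module.Basis (Option ι) k A) (σ : Equiv.Perm (Fin ℓ))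
    (g : Fin ℓ → Option ι) (x : ⨂[k] _ : Fin ℓ, A) :
    lamF e ℓ g (PiTensorProduct.reindex k (fun _ : Fin ℓ => A) σ x)
      = lamF e ℓ (g ∘ σ) x := by
  have hmain : (lamF e ℓ g).comp
      (PiTensorProduct.reindex k (fun _ : Fin ℓ => A) σ).toLinearMap
      = lamF e ℓ (g ∘ σ) := by
    apply PiTensorProduct.ext
    apply MultilinearMap.ext
    intro v
    simp only [LinearMap.compMultilinearMap_apply, LinearMap.comp_apply,
      LinearEquiv.coe_coe, PiTensorProduct.reindex_tprod]
    rw [lamF_tprod, lamF_tprod]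
    exact Fintype.prod_equiv σ.symm _ _ (fun i => by simp)
  exact DFunLike.congr_fun hmain x

lemma lamF_comp_perm (e : Module.Basis (Option ι) k A) {x : ⨂[k] _ : Fin ℓ, A}
    (hx : x ∈ tsSubmodule k A ℓ) (g : Fin ℓ → Option ι) (σ : Equiv.Perm (Fin ℓ)) :
    lamF e ℓ (g ∘ σ) x = lamF e ℓ g x := by
  rw [← lamF_reindex, hx σ]

/-! ### Spanning by basic tensors -/

lemma mem_span_basis_tprods (e : Module.Basis (Option ι) k A) (x : ⨂[k] _ : Fin ℓ, A) :
    x ∈ Submodule.span k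
      (Set.range fun f : Fin ℓ → Option ι => tprod k fun i => e (f i)) := by
  have key : ∀ v : Fin ℓ → A, (tprod k v : ⨂[k] _ : Fin ℓ, A) ∈ Submodule.span k
      (Set.range fun f : Fin ℓ → Option ι => tprod k fun i => e (f i)) := by
    intro v
    have hv : v = fun i => ∑ c ∈ (e.repr (v i)).support, e.repr (v i) c • e c := by
      funext i
      conv_lhs => rw [← e.linearCombination_repr (v i)]
      simp [Finsupp.linearCombination_apply, Finsupp.sum]
    have hexp : (tprod k v : ⨂[k] _ : Fin ℓ, A)
        = ∑ r ∈ Fintype.piFinset (fun i => (e.repr (v i)).support),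
            tprod k (fun i => e.repr (v i) (r i) • e (r i)) := by
      conv_lhs => rw [hv]
      exact MultilinearMap.map_sum_finset (PiTensorProduct.tprod k)
        (fun i c => e.repr (v i) c • e c) (fun i => (e.repr (v i)).support)
    rw [hexp]
    refine Submodule.sum_mem _ fun r _ => ?_
    have hsm := MultilinearMap.map_smul_univ (PiTensorProduct.tprod k (s := fun _ : Fin ℓ => A))
      (fun i => e.repr (v i) (r i)) (fun i => e (r i))
    rw [hsm]
    exact Submodule.smul_mem _ _ (Submodule.subset_span ⟨r, rfl⟩)
  have h1 : x ∈ Submodule.span k (Set.range (tprod k (s := fun _ : Fin ℓ => A))) := by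
    rw [PiTensorProduct.span_tprod_eq_top]; trivial
  refine Submodule.span_le.2 ?_ h1
  rintro t ⟨v, rfl⟩
  exact key v

/-! ### Symmetry of products -/

lemma reindex_mul (σ : Equiv.Perm (Fin ℓ)) (x y : ⨂[k] _ : Fin ℓ, A) :
    PiTensorProduct.reindex k (fun _ : Fin ℓ => A) σ (x * y)
      = PiTensorProduct.reindex k (fun _ : Fin ℓ => A) σ x
        * PiTensorProduct.reindex k (fun _ : Fin ℓ => A) σ y := by
  induction x using PiTensorProduct.induction_on with
  | smul_tprod c v =>
    induction y using PiTensorProduct.induction_on with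
    | smul_tprod d w =>
      simp only [smul_mul_assoc, mul_smul_comm, map_smul, tprod_mul_tprod,
        PiTensorProduct.reindex_tprod]
      rfl
    | add y1 y2 h1 h2 => simp only [mul_add, map_add, h1, h2]
  | add x1 x2 h1 h2 => simp only [add_mul, map_add, h1, h2]

lemma one_mem_ts : (1 : ⨂[k] _ : Fin ℓ, A) ∈ tsSubmodule k A ℓ := by
  intro σ
  rw [PiTensorProduct.one_def, PiTensorProduct.reindex_tprod]
  rfl

lemma mul_mem_ts {x y : ⨂[k] _ : Fin ℓ, A} (hx : x ∈ tsSubmodule k A ℓ)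
    (hy : y ∈ tsSubmodule k A ℓ) : x * y ∈ tsSubmodule k A ℓ := by
  intro σ
  rw [reindex_mul, hx σ, hy σ]

lemma symTen_mem_ts (a : A) : symTen k A ℓ a ∈ tsSubmodule k A ℓ := by
  intro σ
  unfold symTen
  rw [map_sum]
  calc ∑ i : Fin ℓ, PiTensorProduct.reindex k (fun _ : Fin ℓ => A) σ
        (tprod k (Function.update (fun _ : Fin ℓ => (1 : A)) i a))
      = ∑ i : Fin ℓ, tprod k (Function.update (fun _ : Fin ℓ => (1 : A)) (σ i) a) := by
        refine Finset.sum_congr rfl fun i _ => ?_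
        rw [PiTensorProduct.reindex_tprod]
        congr 1
        funext j
        simp only [Function.comp_apply, Function.update_apply]
        by_cases h : σ.symm j = i
        · rw [if_pos h, if_pos (by rw [← h, Equiv.apply_symm_apply])]
        · rw [if_neg h, if_neg (fun hc => h (by rw [hc, Equiv.symm_apply_apply]))]
    _ = ∑ i : Fin ℓ, tprod k (Function.update (fun _ : Fin ℓ => (1 : A)) i a) :=
        Equiv.sum_comp σ (fun j => tprod k (Function.update (fun _ : Fin ℓ => (1 : A)) j a))

lemma listProd_mem_ts (b : ι → A) (l : List ι) :
    (l.map (fun i => symTen k A ℓ (b i))).prod ∈ tsSubmodule k A ℓ := by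
  induction l with
  | nil => simpa using one_mem_ts
  | cons a l ih =>
    rw [List.map_cons, List.prod_cons]
    exact mul_mem_ts (symTen_mem_ts (b a)) ih

/-! ### The orbit sums -/

/-- Canonical (sorted) form of a tuple. -/
noncomputable def canon (g : Fin ℓ → Option ι) : Fin ℓ → Option ι :=
  g ∘ Tuple.sort g

lemma canon_monotone (g : Fin ℓ → Option ι) : Monotone (canon g) :=
  Tuple.monotone_sort g

lemma canon_comp_perm (g : Fin ℓ → Option ι) (σ : Equiv.Perm (Fin ℓ)) :
    canon (g ∘ σ) = canon g :=
  Tuple.comp_perm_comp_sort_eq_comp_sort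

lemma canon_of_monotone {g : Fin ℓ → Option ι} (hg : Monotone g) : canon g = g := by
  unfold canon
  rw [Tuple.sort_eq_refl_iff_monotone.2 hg]
  rfl

/-- The finite orbit of the canonical tuple of `l` under permutations. -/
noncomputable def orbitSet (ℓ : ℕ) (l : List ι) : Finset (Fin ℓ → Option ι) :=
  Finset.image (fun σ : Equiv.Perm (Fin ℓ) => wfun ℓ l ∘ σ) Finset.univ

lemma mem_orbitSet_iff {l : List ι} (hs : l.Pairwise (· ≤ ·)) (hl : l.length ≤ ℓ)
    {f : Fin ℓ → Option ι} : f ∈ orbitSet ℓ l ↔ canon f = wfun ℓ l := by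
  constructor
  · rintro hf
    obtain ⟨σ, -, rfl⟩ := Finset.mem_image.1 hf
    rw [canon_comp_perm, canon_of_monotone (wfun_monotone hs hl)]
  · intro hc
    refine Finset.mem_image.2 ⟨(Tuple.sort f)⁻¹, Finset.mem_univ _, ?_⟩
    rw [← hc]
    funext j
    simp [canon]

/-- Orbit sum attached to a sorted list. -/
noncomputable def orbSum (e : Module.Basis (Option ι) k A) (ℓ : ℕ) (l : List ι) :
    ⨂[k] _ : Fin ℓ, A :=
  ∑ f ∈ orbitSet ℓ l, tprod k fun i => e (f i)

lemma orbSum_mem_ts (e : Module.Basis (Option ι) k A) {l : List ι} (hs : l.Pairwise (· ≤ ·))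
    (hl : l.length ≤ ℓ) : orbSum e ℓ l ∈ tsSubmodule k A ℓ := by
  intro σ
  unfold orbSum
  rw [map_sum]
  simp_rw [PiTensorProduct.reindex_tprod]
  refine Finset.sum_equiv (Equiv.arrowCongr σ (Equiv.refl (Option ι))) ?_ ?_
  · intro x
    have harr : (Equiv.arrowCongr σ (Equiv.refl (Option ι))) x = x ∘ ⇑σ.symm := rfl
    rw [harr, mem_orbitSet_iff hs hl, mem_orbitSet_iff hs hl, canon_comp_perm]
  · intro x hx
    rfl

lemma lamF_orbSum (e : Module.Basis (Option ι) k A) {l l' : List ι}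
    (hs : l.Pairwise (· ≤ ·)) (hl : l.length ≤ ℓ)
    (hs' : l'.Pairwise (· ≤ ·)) (hl' : l'.length ≤ ℓ) :
    lamF e ℓ (wfun ℓ l') (orbSum e ℓ l) = if l' = l then 1 else 0 := by
  unfold orbSum
  rw [map_sum]
  have : ∀ f ∈ orbitSet ℓ l,
      lamF e ℓ (wfun ℓ l') (tprod k fun i => e (f i))
        = if wfun ℓ l' = f then 1 else 0 := fun f _ => lamF_tprod_basis e _ f
  rw [Finset.sum_congr rfl this, Finset.sum_ite_eq (orbitSet ℓ l) (wfun ℓ l')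
    (fun _ => (1 : k))]
  have hmem : wfun ℓ l' ∈ orbitSet ℓ l ↔ l' = l := by
    rw [mem_orbitSet_iff hs hl, canon_of_monotone (wfun_monotone hs' hl')]
    constructor
    · exact fun h => wfun_injective hl' hl h
    · rintro rfl; rfl
  by_cases h : l' = l
  · rw [if_pos (hmem.2 h), if_pos h]
  · rw [if_neg (fun hc => h (hmem.1 hc)), if_neg h]

/-! ### Expansion of products of symmetrized tensors -/

/-- The `i`-th slot of the term of the expansion indexed by the placement function `t`. -/
noncomputable def slotProd {j : ℕ} (v : Fin j → A) (t : Fin j → Fin ℓ) (i : Fin ℓ) : A :=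
  (((List.finRange j).filter (fun r => t r = i)).map v).prod

lemma slotProd_of_not_mem {j : ℕ} (v : Fin j → A) (t : Fin j → Fin ℓ) (i : Fin ℓ)
    (h : ∀ r, t r ≠ i) : slotProd v t i = 1 := by
  have hnil : (List.finRange j).filter (fun r => t r = i) = [] :=
    List.filter_eq_nil_iff.2 (fun a _ => by simpa using h a)
  simp [slotProd, hnil]

lemma nodup_filter_eq {α : Type*} [DecidableEq α] :
    ∀ (L : List α), L.Nodup → ∀ (a : α), a ∈ L → L.filter (fun x => x = a) = [a] := by
  intro L
  induction L with
  | nil => intro _ a ha; exact absurd ha (List.not_mem_nil (a := a))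
  | cons x xs ih =>
    intro hnd a ha
    rw [List.nodup_cons] at hnd
    rw [List.filter_cons]
    rcases List.mem_cons.1 ha with rfl | hmem
    · rw [if_pos (by simp)]
      have : xs.filter (fun y => y = a) = [] :=
        List.filter_eq_nil_iff.2 (fun y hy => by
          simp only [decide_eq_true_eq]
          rintro rfl
          exact hnd.1 hy)
      rw [this]
    · have hxa : x ≠ a := fun h => hnd.1 (h ▸ hmem)
      rw [if_neg (by simpa using hxa), ih hnd.2 a hmem]

lemma filter_eq_singleton {j : ℕ} {t : Fin j → Fin ℓ} (ht : Function.Injective t) (r : Fin j) :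
    (List.finRange j).filter (fun r' => t r' = t r) = [r] := by
  have h1 : (List.finRange j).filter (fun r' => t r' = t r)
      = (List.finRange j).filter (fun r' => r' = r) :=
    List.filter_congr (fun x _ => by
      simp only [decide_eq_true_eq, decide_eq_decide]
      exact ⟨fun h => ht h, fun h => by rw [h]⟩)
  rw [h1]
  exact nodup_filter_eq _ (List.nodup_finRange j) r (List.mem_finRange r)

lemma slotProd_apply_inj {j : ℕ} (v : Fin j → A) {t : Fin j → Fin ℓ}
    (ht : Function.Injective t) (r : Fin j) : slotProd v t (t r) = v r := by
  unfold slotProd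
  rw [filter_eq_singleton ht r]
  simp

lemma prod_symTen_expand : ∀ (j : ℕ) (v : Fin j → A),
    (List.ofFn (fun r => symTen k A ℓ (v r))).prod
      = ∑ t : Fin j → Fin ℓ, tprod k (slotProd v t) := by
  intro j
  induction j with
  | zero =>
    intro v
    rw [List.ofFn_zero, List.prod_nil, Fintype.sum_unique]
    have hone : slotProd v (default : Fin 0 → Fin ℓ) = fun _ => (1 : A) :=
      funext fun i => slotProd_of_not_mem _ _ _ (fun r => r.elim0)
    rw [hone]
    exact PiTensorProduct.one_def
  | succ n ih =>
    intro v
    rw [List.ofFn_succ, List.prod_cons, ih (fun r => v r.succ), Finset.mul_sum]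
    have hsym : ∀ t : Fin n → Fin ℓ,
        symTen k A ℓ (v 0) * tprod k (slotProd (fun r => v r.succ) t)
          = ∑ i : Fin ℓ, tprod k (slotProd v (Fin.cons i t)) := by
      intro t
      unfold symTen
      rw [Finset.sum_mul]
      refine Finset.sum_congr rfl fun i _ => ?_
      rw [tprod_mul_tprod]
      congr 1
      funext i'
      show Function.update (fun _ : Fin ℓ => (1:A)) i (v 0) i'
          * slotProd (fun r => v r.succ) t i' = slotProd v (Fin.cons i t) i'
      unfold slotProd
      rw [List.finRange_succ, List.filter_cons, List.filter_map]
      have hpred : (List.finRange n).filter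
            ((fun r : Fin (n+1) => decide ((Fin.cons i t : Fin (n+1) → Fin ℓ) r = i'))
              ∘ Fin.succ)
          = (List.finRange n).filter (fun r => decide (t r = i')) :=
        List.filter_congr (fun x _ => by
          simp only [Function.comp_apply, Fin.cons_succ])
      rw [hpred]
      by_cases h : i' = i
      · subst h
        rw [if_pos (by simp), List.map_cons, List.prod_cons, Function.update_self,
          List.map_map]
        rfl
      · rw [if_neg (by simpa using fun hc : i = i' => h hc.symm),
          Function.update_of_ne h, one_mul, List.map_map]
        rfl
    rw [Finset.sum_congr rfl (fun t _ => hsym t), Finset.sum_comm]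
    calc ∑ y : Fin ℓ, ∑ x : Fin n → Fin ℓ, tprod k (slotProd v (Fin.cons y x))
        = ∑ p : Fin ℓ × (Fin n → Fin ℓ), tprod k (slotProd v (Fin.cons p.1 p.2)) :=
          (Fintype.sum_prod_type
            (fun p : Fin ℓ × (Fin n → Fin ℓ) => tprod k (slotProd v (Fin.cons p.1 p.2)))).symm
      _ = ∑ t' : Fin (n+1) → Fin ℓ, tprod k (slotProd v t') :=
          Fintype.sum_equiv (Fin.consEquiv (fun _ => Fin ℓ)) _ _ (fun p => rfl)

lemma prod_symTen_list (b : ι → A) (l : List ι) :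
    (l.map (fun i => symTen k A ℓ (b i))).prod
      = ∑ t : Fin l.length → Fin ℓ, tprod k (slotProd (fun r => b (l.get r)) t) := by
  rw [← prod_symTen_expand l.length (fun r => b (l.get r))]
  congr 1
  rw [show (fun r : Fin l.length => symTen k A ℓ (b (l.get r)))
      = (fun i => symTen k A ℓ (b i)) ∘ l.get from rfl, ← List.map_ofFn, List.ofFn_get]

/-! ### The coefficients of products of symmetrized tensors -/

/-- The placement functions contributing `1` to the coefficient of `wfun ℓ l'` in the
expansion of the product attached to `l`. -/
def IsGood (ℓ : ℕ) (l l' : List ι) (t : Fin l.length → Fin ℓ) : Prop :=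
  (∀ i : Fin ℓ, (i : ℕ) < l'.length → ∃ r, t r = i) ∧
    ∀ r, wfun ℓ l' (t r) = some (l.get r)

lemma repr_one_eval (e : Module.Basis (Option ι) k A) (he1 : e none = 1) (x : Option ι) :
    e.repr (1 : A) x = if (none : Option ι) = x then 1 else 0 := by
  rw [← he1, e.repr_self, Finsupp.single_apply]

lemma repr_b_eval (e : Module.Basis (Option ι) k A) {b : ι → A} (heb : ∀ i, e (some i) = b i)
    (a : ι) (x : Option ι) :
    e.repr (b a) x = if (some a : Option ι) = x then 1 else 0 := by
  rw [← heb, e.repr_self, Finsupp.single_apply]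

lemma cover_struct {l l' : List ι} (hl' : l'.length ≤ ℓ) (hjj' : l.length ≤ l'.length)
    {t : Fin l.length → Fin ℓ}
    (hcov : ∀ i : Fin ℓ, (i : ℕ) < l'.length → ∃ r, t r = i) :
    l.length = l'.length ∧ Function.Injective t ∧
      (∀ r, (t r : ℕ) < l'.length) ∧
      Finset.univ.image t = Finset.univ.map (Fin.castLEEmb hl') := by
  classical
  set I : Finset (Fin ℓ) := Finset.univ.map (Fin.castLEEmb hl') with hI
  have hmemI : ∀ i : Fin ℓ, i ∈ I ↔ (i : ℕ) < l'.length := by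
    intro i
    rw [hI, Finset.mem_map]
    constructor
    · rintro ⟨r0, -, rfl⟩
      exact r0.2
    · intro hi
      exact ⟨⟨(i : ℕ), hi⟩, Finset.mem_univ _, by ext; rfl⟩
  set s : Finset (Fin ℓ) := Finset.univ.image t with hs
  have hIs : I ⊆ s := by
    intro i hi
    obtain ⟨r, hr⟩ := hcov i ((hmemI i).1 hi)
    exact Finset.mem_image.2 ⟨r, Finset.mem_univ _, hr⟩
  have hcardI : I.card = l'.length := by
    rw [hI, Finset.card_map, Finset.card_univ, Fintype.card_fin]
  have hcards : s.card ≤ l.length := by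
    calc s.card ≤ Finset.univ.card := Finset.card_image_le.trans (by rw [Finset.card_univ])
      _ = l.length := by rw [Finset.card_univ, Fintype.card_fin]
  have hj'j : l'.length ≤ l.length := by
    calc l'.length = I.card := hcardI.symm
      _ ≤ s.card := Finset.card_le_card hIs
      _ ≤ l.length := hcards
  have hj : l.length = l'.length := le_antisymm hjj' hj'j
  have hIeq : I = s := Finset.eq_of_subset_of_card_le hIs (by omega)
  have hinj : Function.Injective t := by
    have hcard : s.card = (Finset.univ : Finset (Fin l.length)).card := by
      rw [Finset.card_univ, Fintype.card_fin, ← hIeq, hcardI, hj]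
    have h2 := Finset.card_image_iff.1 hcard
    exact fun a a' h => h2 (by simp) (by simp) h
  refine ⟨hj, hinj, fun r => ?_, hIeq.symm⟩
  have : t r ∈ s := Finset.mem_image.2 ⟨r, Finset.mem_univ _, rfl⟩
  rw [← hIeq] at this
  exact (hmemI _).1 this

open scoped Classical in
lemma lamF_slot_term (e : Module.Basis (Option ι) k A) (he1 : e none = 1) {b : ι → A}
    (heb : ∀ i, e (some i) = b i) {l l' : List ι}
    (hjj' : l.length ≤ l'.length) (hl' : l'.length ≤ ℓ)
    (t : Fin l.length → Fin ℓ) :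
    lamF e ℓ (wfun ℓ l') (tprod k (slotProd (fun r => b (l.get r)) t))
      = if IsGood ℓ l l' t then 1 else 0 := by
  rw [lamF_tprod]
  by_cases hcov : ∀ i : Fin ℓ, (i : ℕ) < l'.length → ∃ r, t r = i
  · obtain ⟨hj, hinj, hrange, himg⟩ := cover_struct hl' hjj' hcov
    have hsplit := Finset.prod_mul_prod_compl (Finset.univ.image t)
      (fun i => e.repr (slotProd (fun r => b (l.get r)) t i) (wfun ℓ l' i))
    rw [← hsplit]
    have hcompl : (∏ i ∈ (Finset.univ.image t)ᶜ,
        e.repr (slotProd (fun r => b (l.get r)) t i) (wfun ℓ l' i)) = 1 := by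
      refine Finset.prod_eq_one fun i hi => ?_
      rw [Finset.mem_compl] at hi
      have hnor : ∀ r, t r ≠ i := fun r hr =>
        hi (Finset.mem_image.2 ⟨r, Finset.mem_univ _, hr⟩)
      have hge : l'.length ≤ (i : ℕ) := by
        by_contra hlt
        push_neg at hlt
        obtain ⟨r, hr⟩ := hcov i hlt
        exact hnor r hr
      rw [slotProd_of_not_mem _ _ _ hnor, wfun_ge hge, repr_one_eval e he1, if_pos rfl]
    rw [hcompl, mul_one]
    rw [Finset.prod_image (fun x _ y _ h => hinj h)]
    have hterm : ∀ r : Fin l.length,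
        e.repr (slotProd (fun r' => b (l.get r')) t (t r)) (wfun ℓ l' (t r))
          = if wfun ℓ l' (t r) = some (l.get r) then 1 else 0 := by
      intro r
      rw [slotProd_apply_inj _ hinj, repr_b_eval e heb]
      by_cases h : wfun ℓ l' (t r) = some (l.get r)
      · rw [if_pos h.symm, if_pos h]
      · rw [if_neg (fun hc => h hc.symm), if_neg h]
    rw [Finset.prod_congr rfl (fun r _ => hterm r), Fintype.prod_boole]
    by_cases h : ∀ r, wfun ℓ l' (t r) = some (l.get r)
    · rw [if_pos h, if_pos ⟨hcov, h⟩]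
    · rw [if_neg h, if_neg (fun hg => h hg.2)]
  · push_neg at hcov
    obtain ⟨i, hi, hnor⟩ := hcov
    rw [if_neg (fun hg : IsGood ℓ l l' t => by
      obtain ⟨r, hr⟩ := hg.1 i hi
      exact hnor r hr)]
    refine Finset.prod_eq_zero (Finset.mem_univ i) ?_
    rw [slotProd_of_not_mem _ _ _ hnor, wfun_lt hi, repr_one_eval e he1,
      if_neg (by simp)]

open scoped Classical in
lemma lamF_prod_eq_card (e : Module.Basis (Option ι) k A) (he1 : e none = 1) {b : ι → A}
    (heb : ∀ i, e (some i) = b i) {l l' : List ι}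
    (hjj' : l.length ≤ l'.length) (hl' : l'.length ≤ ℓ) :
    lamF e ℓ (wfun ℓ l') ((l.map (fun i => symTen k A ℓ (b i))).prod)
      = ((Finset.univ.filter (fun t : Fin l.length → Fin ℓ => IsGood ℓ l l' t)).card : k) := by
  rw [prod_symTen_list, map_sum,
    Finset.sum_congr rfl (fun t _ => lamF_slot_term e he1 heb hjj' hl' t),
    Finset.sum_boole]

lemma isGood_eq {l l' : List ι} (hs : l.Pairwise (· ≤ ·)) (hs' : l'.Pairwise (· ≤ ·))
    (hjj' : l.length ≤ l'.length) (hl' : l'.length ≤ ℓ)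
    {t : Fin l.length → Fin ℓ} (hg : IsGood ℓ l l' t) : l = l' := by
  obtain ⟨hj, hinj, hrange, -⟩ := cover_struct hl' hjj' hg.1
  have hbij : Function.Bijective (fun r : Fin l.length => (⟨(t r : ℕ), hrange r⟩ : Fin l'.length)) := by
    rw [Fintype.bijective_iff_injective_and_card]
    constructor
    · intro r r' h
      simp only [Fin.mk.injEq] at h
      exact hinj (Fin.ext h)
    · simp [hj]
  refine sorted_eq_of_equiv hs hs' (Equiv.ofBijective _ hbij) (fun r => ?_)
  have := hg.2 r
  rw [wfun_lt (hrange r)] at this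
  have h2 : l'.get ⟨(t r : ℕ), hrange r⟩ = l.get r := Option.some_injective _ this
  simpa [Equiv.ofBijective] using h2

lemma isGood_id {l : List ι} (hl : l.length ≤ ℓ) :
    IsGood ℓ l l (fun r => ⟨(r : ℕ), lt_of_lt_of_le r.2 hl⟩) := by
  constructor
  · intro i hi
    exact ⟨⟨(i : ℕ), hi⟩, by ext; rfl⟩
  · intro r
    rw [wfun_lt (show ((⟨(r : ℕ), lt_of_lt_of_le r.2 hl⟩ : Fin ℓ) : ℕ) < l.length from r.2)]

lemma lamF_prod_ne (e : Module.Basis (Option ι) k A) (he1 : e none = 1) {b : ι → A}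
    (heb : ∀ i, e (some i) = b i) {l l' : List ι}
    (hs : l.Pairwise (· ≤ ·)) (hs' : l'.Pairwise (· ≤ ·))
    (hjj' : l.length ≤ l'.length) (hl' : l'.length ≤ ℓ) (hne : l ≠ l') :
    lamF e ℓ (wfun ℓ l') ((l.map (fun i => symTen k A ℓ (b i))).prod) = 0 := by
  classical
  rw [lamF_prod_eq_card e he1 heb hjj' hl']
  have : (Finset.univ.filter (fun t : Fin l.length → Fin ℓ => IsGood ℓ l l' t)) = ∅ := by
    refine Finset.filter_eq_empty_iff.2 (fun t _ => fun hg => ?_)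
    exact hne (isGood_eq hs hs' hjj' hl' hg)
  rw [this]
  simp

lemma lamF_prod_self [CharZero k] (e : Module.Basis (Option ι) k A) (he1 : e none = 1) {b : ι → A}
    (heb : ∀ i, e (some i) = b i) {l : List ι} (hl : l.length ≤ ℓ) :
    lamF e ℓ (wfun ℓ l) ((l.map (fun i => symTen k A ℓ (b i))).prod) ≠ 0 := by
  classical
  rw [lamF_prod_eq_card e he1 heb le_rfl hl]
  rw [Nat.cast_ne_zero]
  refine Finset.card_ne_zero_of_mem (Finset.mem_filter.2 ⟨Finset.mem_univ _, isGood_id hl⟩)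

/-! ### Coefficient representation of arbitrary tensors -/

lemma exists_coeff (e : Module.Basis (Option ι) k A) (x : ⨂[k] _ : Fin ℓ, A) :
    ∃ c : (Fin ℓ → Option ι) →₀ k,
      (∀ g, lamF e ℓ g x = c g) ∧
      (c.sum fun f r => r • (tprod k fun i => e (f i))) = x := by
  obtain ⟨c, hc⟩ := Finsupp.mem_span_range_iff_exists_finsupp.1 (mem_span_basis_tprods e x)
  refine ⟨c, fun g => ?_, hc⟩
  rw [← hc, map_finsuppSum, Finsupp.sum]
  rw [Finset.sum_congr rfl (fun f _ => by
    rw [map_smul, lamF_tprod_basis, smul_eq_mul, mul_ite, mul_one, mul_zero])]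
  rw [Finset.sum_ite_eq c.support g (fun f => c f)]
  by_cases h : g ∈ c.support
  · rw [if_pos h]
  · rw [if_neg h, (Finsupp.notMem_support_iff.1 h)]

lemma eq_zero_of_lamF_sorted (e : Module.Basis (Option ι) k A) {x : ⨂[k] _ : Fin ℓ, A}
    (hx : x ∈ tsSubmodule k A ℓ)
    (h0 : ∀ l : List ι, l.Pairwise (· ≤ ·) → l.length ≤ ℓ → lamF e ℓ (wfun ℓ l) x = 0) :
    x = 0 := by
  obtain ⟨c, hlam, hc⟩ := exists_coeff e x
  have hall : ∀ g : Fin ℓ → Option ι, lamF e ℓ g x = 0 := by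
    intro g
    obtain ⟨l, hs, hl, hw⟩ := monotone_eq_wfun (canon g) (canon_monotone g)
    have h1 : lamF e ℓ (canon g) x = lamF e ℓ g x := lamF_comp_perm e hx g (Tuple.sort g)
    rw [← h1, ← hw]
    exact h0 l hs hl
  rw [← hc, Finsupp.sum]
  refine Finset.sum_eq_zero fun f _ => ?_
  rw [show c f = 0 from by rw [← hlam f]; exact hall f, zero_smul]

lemma mem_ts_rep (e : Module.Basis (Option ι) k A) {x : ⨂[k] _ : Fin ℓ, A}
    (hx : x ∈ tsSubmodule k A ℓ) :
    ∃ u : Finset {l : List ι // l.Pairwise (· ≤ ·) ∧ l.length ≤ ℓ},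
      (∀ l'' : {l : List ι // l.Pairwise (· ≤ ·) ∧ l.length ≤ ℓ}, l'' ∉ u →
        lamF e ℓ (wfun ℓ l''.val) x = 0) ∧
      x = ∑ l ∈ u, lamF e ℓ (wfun ℓ l.val) x • orbSum e ℓ l.val := by
  classical
  obtain ⟨c, hlam, hc⟩ := exists_coeff e x
  have hwinj : Set.InjOn (fun l : {l : List ι // l.Pairwise (· ≤ ·) ∧ l.length ≤ ℓ} =>
      wfun ℓ l.val) ((fun l : {l : List ι // l.Pairwise (· ≤ ·) ∧ l.length ≤ ℓ} =>
      wfun ℓ l.val) ⁻¹' c.support) := fun l1 _ l2 _ h =>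
    Subtype.ext (wfun_injective l1.2.2 l2.2.2 h)
  refine ⟨c.support.preimage _ hwinj, ?_, ?_⟩
  · intro l'' hl''
    rw [Finset.mem_preimage] at hl''
    rw [hlam]
    exact Finsupp.notMem_support_iff.1 hl''
  · set u := c.support.preimage _ hwinj with hu
    set y : ⨂[k] _ : Fin ℓ, A := ∑ l ∈ u, lamF e ℓ (wfun ℓ l.val) x • orbSum e ℓ l.val
      with hy
    have hymem : y ∈ tsSubmodule k A ℓ :=
      Submodule.sum_mem _ fun l _ =>
        Submodule.smul_mem _ _ (orbSum_mem_ts e l.2.1 l.2.2)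
    have hsub : x - y = 0 := by
      refine eq_zero_of_lamF_sorted e (Submodule.sub_mem _ hx hymem) ?_
      intro l' hs' hl'
      rw [map_sub]
      have hylam : lamF e ℓ (wfun ℓ l') y
          = if (⟨l', hs', hl'⟩ : {l : List ι // l.Pairwise (· ≤ ·) ∧ l.length ≤ ℓ}) ∈ u
            then lamF e ℓ (wfun ℓ l') x else 0 := by
        rw [hy, map_sum]
        rw [Finset.sum_congr rfl (fun l _ => by
          rw [map_smul, lamF_orbSum e l.2.1 l.2.2 hs' hl', smul_eq_mul, mul_ite, mul_one,
            mul_zero])]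
        have hcond : ∀ l ∈ u,
            (if l' = l.val then lamF e ℓ (wfun ℓ l.val) x else 0)
              = if (⟨l', hs', hl'⟩ : {l : List ι // l.Pairwise (· ≤ ·) ∧ l.length ≤ ℓ}) = l
                then lamF e ℓ (wfun ℓ l') x else 0 := by
          intro l _
          by_cases h : l' = l.val
          · rw [if_pos h, if_pos (Subtype.ext h)]
            subst h
            rfl
          · rw [if_neg h, if_neg (fun hc => h (congrArg Subtype.val hc))]
        rw [Finset.sum_congr rfl hcond,
          Finset.sum_ite_eq u (⟨l', hs', hl'⟩ : {l : List ι // l.Pairwise (· ≤ ·) ∧ l.length ≤ ℓ})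
            (fun _ => lamF e ℓ (wfun ℓ l') x)]
      rw [hylam]
      by_cases h : (⟨l', hs', hl'⟩ : {l : List ι // l.Pairwise (· ≤ ·) ∧ l.length ≤ ℓ}) ∈ u
      · rw [if_pos h, sub_self]
      · rw [if_neg h, sub_zero, hlam]
        rw [hu] at h
        rw [Finset.mem_preimage] at h
        exact Finsupp.notMem_support_iff.1 h
    have := sub_eq_zero.1 hsub
    exact this

end Main



end TSAux

/-- if `{1_A} ∪ B` is a basis of the vector space `A` (here `B` is given as the
injective image of a linearly ordered index type `ι`, the basis being indexed by `Option ι` with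
`none ↦ 1_A`), then the family consisting of `1_A^{⊗ℓ}` (the empty product, i.e. the identity of
`A^{⊗ℓ}`) together with the products `sym_ℓ(b_1)⋯sym_ℓ(b_j)` over nondecreasing tuples
`b_1 ≤ ⋯ ≤ b_j` of elements of `B` with `1 ≤ j ≤ ℓ`, is a basis of `TS^ℓ(A)`. -/
theorem ts_basis_of_sorted_products (k A : Type*) [Field k] [CharZero k] [Ring A] [Algebra k A]
    (ℓ : ℕ) (hℓ : 0 < ℓ) (ι : Type*) [LinearOrder ι] (b : ι → A)
    (e : Module.Basis (Option ι) k A) (he1 : e none = 1) (heb : ∀ i, e (some i) = b i) :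
    ∃ Bs : Module.Basis {l : List ι // l.Pairwise (· ≤ ·) ∧ l.length ≤ ℓ} k
        (tsSubmodule k A ℓ),
      ∀ l, (Bs l : ⨂[k] _ : Fin ℓ, A) =
        (l.val.map (fun i => symTen k A ℓ (b i))).prod := by
  classical
  let P' : {l : List ι // l.Pairwise (· ≤ ·) ∧ l.length ≤ ℓ} → tsSubmodule k A ℓ :=
    fun l => ⟨(l.val.map (fun i => symTen k A ℓ (b i))).prod, TSAux.listProd_mem_ts b l.val⟩
  let O' : {l : List ι // l.Pairwise (· ≤ ·) ∧ l.length ≤ ℓ} → tsSubmodule k A ℓ :=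
    fun l => ⟨TSAux.orbSum e ℓ l.val, TSAux.orbSum_mem_ts e l.2.1 l.2.2⟩
  have hvalP : ∀ l, (P' l : ⨂[k] _ : Fin ℓ, A)
      = (l.val.map (fun i => symTen k A ℓ (b i))).prod := fun l => rfl
  have hvalO : ∀ l, (O' l : ⨂[k] _ : Fin ℓ, A) = TSAux.orbSum e ℓ l.val := fun l => rfl
  -- linear independence
  have hind : LinearIndependent k P' := by
    rw [linearIndependent_iff]
    intro g hg
    by_contra hne
    obtain ⟨l0, hl0mem, hl0max⟩ := Finset.exists_max_image g.support (fun l => l.val.length)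
      (Finsupp.support_nonempty_iff.2 hne)
    have hval2 : ∑ l ∈ g.support, g l • (P' l : ⨂[k] _ : Fin ℓ, A) = 0 := by
      have h1 := congrArg (Subtype.val) hg
      rw [Finsupp.linearCombination_apply, Finsupp.sum] at h1
      simpa using h1
    have h2 := congrArg (TSAux.lamF e ℓ (TSAux.wfun ℓ l0.val)) hval2
    rw [map_sum, map_zero] at h2
    simp only [map_smul, smul_eq_mul, hvalP] at h2
    have hzero : ∀ l ∈ g.support, l ≠ l0 →
        g l * TSAux.lamF e ℓ (TSAux.wfun ℓ l0.val)
          ((l.val.map (fun i => symTen k A ℓ (b i))).prod) = 0 := by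
      intro l hl hlne
      rw [TSAux.lamF_prod_ne e he1 heb l.2.1 l0.2.1 (hl0max l hl) l0.2.2
        (fun h => hlne (Subtype.ext h)), mul_zero]
    rw [Finset.sum_eq_single_of_mem l0 hl0mem hzero] at h2
    have hgl0 : g l0 = 0 := by
      rcases mul_eq_zero.1 h2 with h | h
      · exact h
      · exact absurd h (TSAux.lamF_prod_self e he1 heb l0.2.2)
    exact Finsupp.mem_support_iff.1 hl0mem hgl0
  -- spanning
  have hOspan : ∀ (n : ℕ) (l : {l : List ι // l.Pairwise (· ≤ ·) ∧ l.length ≤ ℓ}),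
      l.val.length = n → O' l ∈ Submodule.span k (Set.range P') := by
    intro n
    induction n using Nat.strong_induction_on with
    | _ n IH =>
      intro l hn
      obtain ⟨u, hout, hrep⟩ := TSAux.mem_ts_rep e (TSAux.listProd_mem_ts b l.val)
      set κ : {l : List ι // l.Pairwise (· ≤ ·) ∧ l.length ≤ ℓ} → k := fun l' =>
        TSAux.lamF e ℓ (TSAux.wfun ℓ l'.val)
          ((l.val.map (fun i => symTen k A ℓ (b i))).prod) with hκ
      have hκl : κ l ≠ 0 := TSAux.lamF_prod_self e he1 heb l.2.2
      have hlin : l ∈ u := by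
        by_contra hlu
        exact hκl (hout l hlu)
      have hrepS : P' l = ∑ l' ∈ u, κ l' • O' l' := by
        apply Subtype.ext
        show (l.val.map (fun i => symTen k A ℓ (b i))).prod = _
        rw [hrep]
        have hcoe : ((∑ l' ∈ u, κ l' • O' l' : tsSubmodule k A ℓ) : ⨂[k] _ : Fin ℓ, A)
            = ∑ l' ∈ u, κ l' • (O' l' : ⨂[k] _ : Fin ℓ, A) := by
          simp
        rw [hcoe]
      have hOl : O' l = (κ l)⁻¹ • (P' l - ∑ l' ∈ u.erase l, κ l' • O' l') := by
        rw [hrepS, ← Finset.add_sum_erase u _ hlin, add_sub_cancel_right,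
          inv_smul_smul₀ hκl]
      rw [hOl]
      refine Submodule.smul_mem _ _ (Submodule.sub_mem _ (Submodule.subset_span ⟨l, rfl⟩) ?_)
      refine Submodule.sum_mem _ fun l' hl' => ?_
      by_cases hκ' : κ l' = 0
      · rw [hκ', zero_smul]
        exact Submodule.zero_mem _
      · refine Submodule.smul_mem _ _ ?_
        have hne' : l' ≠ l := Finset.ne_of_mem_erase hl'
        have hlt : l'.val.length < l.val.length := by
          by_contra hge
          push_neg at hge
          exact hκ' (TSAux.lamF_prod_ne e he1 heb l.2.1 l'.2.1 hge l'.2.2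
            (fun h => hne' (Subtype.ext h.symm)))
        exact IH l'.val.length (by omega) l' rfl
  have hspan : ⊤ ≤ Submodule.span k (Set.range P') := by
    intro x' _
    obtain ⟨u, -, hrep⟩ := TSAux.mem_ts_rep e x'.2
    have hx' : x' = ∑ l ∈ u, TSAux.lamF e ℓ (TSAux.wfun ℓ l.val) x'.val • O' l := by
      apply Subtype.ext
      rw [show ((∑ l ∈ u, TSAux.lamF e ℓ (TSAux.wfun ℓ l.val) x'.val • O' l :
          tsSubmodule k A ℓ) : ⨂[k] _ : Fin ℓ, A)
        = ∑ l ∈ u, TSAux.lamF e ℓ (TSAux.wfun ℓ l.val) x'.val •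
            (O' l : ⨂[k] _ : Fin ℓ, A) from by simp]
      exact hrep
    rw [hx']
    exact Submodule.sum_mem _ fun l _ => Submodule.smul_mem _ _ (hOspan l.val.length l rfl)
  refine ⟨Module.Basis.mk hind hspan, fun l => ?_⟩
  rw [Module.Basis.mk_apply]
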